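/- Let G be a connected countable graph and U ⊆ V(G) infinite. Then G contains at least one of: (1) a U-comb; (2) a 2-star with all leaves in U; (3) a finite vertex set dominating U. -/

import Mathlib

/-- A ray in `G`: a one-way infinite path, given by an injective sequence of
successively adjacent vertices. -/
def IsRay {α : Type*} (G : SimpleGraph α) (r : ℕ → α) : Prop :=
  Function.Injective r ∧ ∀ n, G.Adj (r n) (r (n + 1))

/-- The set of vertices of a walk. -/
def walkVerts {α : Type*} {G : SimpleGraph α} {a b : α} (p : G.Walk a b) : Set α :=
  {x | x ∈ p.support}

/-- A `U`-star in `G`: a subdivision of the infinite star `K_{1,ω}` all of whose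
leaves lie in `U`, i.e. a centre `c` together with infinitely many paths from `c`
to distinct vertices of `U`, any two of which meet exactly in `c`. -/
def HasUStar {α : Type*} (G : SimpleGraph α) (U : Set α) : Prop :=
  ∃ (c : α) (u : ℕ → α) (P : ∀ n, G.Walk c (u n)),
    Function.Injective u ∧ (∀ n, u n ∈ U) ∧ (∀ n, u n ≠ c) ∧
    (∀ n, (P n).IsPath) ∧
    ∀ m n, m ≠ n → walkVerts (P m) ∩ walkVerts (P n) = {c}

/-- A `U`-comb in `G`: the union of a ray `r` with infinitely many pairwise
disjoint (possibly trivial) paths from `U` to the ray, each meeting the ray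
exactly in its last vertex. -/
def HasUComb {α : Type*} (G : SimpleGraph α) (U : Set α) : Prop :=
  ∃ r : ℕ → α, IsRay G r ∧
    ∃ (a b : ℕ → α) (P : ∀ n, G.Walk (a n) (b n)),
      (∀ n, a n ∈ U) ∧ (∀ n, b n ∈ Set.range r) ∧ (∀ n, (P n).IsPath) ∧
      (∀ n, walkVerts (P n) ∩ Set.range r = {b n}) ∧
      ∀ m n, m ≠ n → Disjoint (walkVerts (P m)) (walkVerts (P n))

/-- A 2-star with all leaves in `U`: obtained from `K_{1,ω}` by subdividing every
edge at least once, i.e. infinitely many paths of length at least 2 from a common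
centre `c` to distinct vertices of `U`, any two meeting exactly in `c`. -/
def HasTwoStar {α : Type*} (G : SimpleGraph α) (U : Set α) : Prop :=
  ∃ (c : α) (u : ℕ → α) (P : ∀ n, G.Walk c (u n)),
    Function.Injective u ∧ (∀ n, u n ∈ U) ∧ (∀ n, (P n).IsPath) ∧
    (∀ n, 2 ≤ (P n).length) ∧
    ∀ m n, m ≠ n → walkVerts (P m) ∩ walkVerts (P n) = {c}

/-- `D` dominates `U` in `G`: every vertex of `U` lies in `D` or has a
neighbour in `D`. -/
def Dominates {α : Type*} (G : SimpleGraph α) (D U : Set α) : Prop :=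
  ∀ u ∈ U, u ∈ D ∨ ∃ d ∈ D, G.Adj d u

namespace StarComb

structure TreeData {α : Type} (G : SimpleGraph α) (U : Set α) where
  t : ℕ → α
  par : ℕ → ℕ
  L : Set ℕ
  ht : Function.Injective t
  hpar0 : par 0 = 0
  hpar : ∀ n, 0 < n → par n < n
  hadj : ∀ n, 0 < n → G.Adj (t (par n)) (t n)
  hL : L.Infinite
  hLU : ∀ m ∈ L, t m ∈ U
  hLpar : ∀ m ∈ L, 1 ≤ m ∧ par m = m - 1
  hcover : ∀ k, ∃ m ∈ L, ∃ s, par^[s] m = k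

namespace TreeData

variable {α : Type} {G : SimpleGraph α} {U : Set α} (D : TreeData G U)

lemma par_le (n : ℕ) : D.par n ≤ n := by
  rcases Nat.eq_zero_or_pos n with h | h
  · simp [h, D.hpar0]
  · exact (D.hpar n h).le

lemma iter_succ_le (m s : ℕ) : D.par^[s + 1] m ≤ D.par^[s] m := by
  rw [Function.iterate_succ_apply']
  exact D.par_le _

lemma iter_le (m : ℕ) {s s' : ℕ} (h : s ≤ s') : D.par^[s'] m ≤ D.par^[s] m := by
  induction s' with
  | zero => simp_all
  | succ n ih =>
    rcases Nat.lt_or_ge s (n + 1) with h' | h'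
    · exact le_trans (D.iter_succ_le m n) (ih (Nat.lt_succ_iff.mp h'))
    · have : s = n + 1 := le_antisymm h h'
      subst this; rfl

lemma iter_zero (m : ℕ) : ∃ s, D.par^[s] m = 0 := by
  induction m using Nat.strong_induction_on with
  | _ m ih =>
    rcases Nat.eq_zero_or_pos m with h | h
    · exact ⟨0, h⟩
    · obtain ⟨s, hs⟩ := ih (D.par m) (D.hpar m h)
      exact ⟨s + 1, by rwa [Function.iterate_succ_apply]⟩

lemma iter_lt {m s e : ℕ} (he : e < s) (hpos : ∀ e' < s, 0 < D.par^[e'] m) :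
    D.par^[s] m < D.par^[e] m := by
  have h1 : D.par^[e + 1] m < D.par^[e] m := by
    rw [Function.iterate_succ_apply']
    exact D.hpar _ (hpos e he)
  exact lt_of_le_of_lt (D.iter_le m he) h1

lemma chainWalk (m s : ℕ) (hpos : ∀ e < s, 0 < D.par^[e] m) :
    ∃ w : G.Walk (D.t m) (D.t (D.par^[s] m)), w.IsPath ∧ w.length = s ∧
      walkVerts w = D.t '' {x | ∃ e ≤ s, D.par^[e] m = x} := by
  induction s with
  | zero =>
    refine ⟨SimpleGraph.Walk.nil, SimpleGraph.Walk.IsPath.nil, rfl, ?_⟩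
    ext x
    simp [walkVerts]
  | succ s ih =>
    obtain ⟨w, hw, hl, hv⟩ := ih (fun e he => hpos e (he.trans (Nat.lt_succ_self s)))
    have hadj : G.Adj (D.t (D.par^[s] m)) (D.t (D.par^[s + 1] m)) := by
      rw [Function.iterate_succ_apply']
      exact (D.hadj _ (hpos s (Nat.lt_succ_self s))).symm
    refine ⟨w.concat hadj, ?_, ?_, ?_⟩
    · rw [SimpleGraph.Walk.isPath_def, SimpleGraph.Walk.support_concat,
        List.nodup_append]
      refine ⟨hw.support_nodup, List.nodup_singleton _, ?_⟩
      intro x hx y hx' hxy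
      subst hxy
      rw [List.mem_singleton] at hx'
      have hxw : x ∈ walkVerts w := hx
      rw [hv] at hxw
      obtain ⟨y, ⟨e, he, hy⟩, hxy⟩ := hxw
      have := D.ht (hxy.trans hx')
      rw [← hy] at this
      have hlt : D.par^[s + 1] m < D.par^[e] m :=
        D.iter_lt (Nat.lt_succ_of_le he) hpos
      omega
    · rw [SimpleGraph.Walk.length_concat, hl]
    · ext x
      simp only [walkVerts, Set.mem_setOf_eq, SimpleGraph.Walk.support_concat,
        List.concat_eq_append, List.mem_append, List.mem_singleton]
      constructor
      · rintro (hx | rfl)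
        · have : x ∈ walkVerts w := hx
          rw [hv] at this
          obtain ⟨y, ⟨e, he, hy⟩, hxy⟩ := this
          exact ⟨y, ⟨e, he.trans (Nat.le_succ s), hy⟩, hxy⟩
        · exact ⟨_, ⟨s + 1, le_refl _, rfl⟩, rfl⟩
      · rintro ⟨y, ⟨e, he, hy⟩, rfl⟩
        rcases Nat.lt_or_ge e (s + 1) with h' | h'
        · left
          have : D.t y ∈ walkVerts w := by
            rw [hv]; exact ⟨y, ⟨e, Nat.lt_succ_iff.mp h', hy⟩, rfl⟩
          exact this
        · right
          have : e = s + 1 := le_antisymm he h'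
          subst this; rw [hy]


/-! ### Comb case -/

def Above (j : ℕ) : Set ℕ := {m | m ∈ D.L ∧ ∃ s, D.par^[s] m = j}

lemma above_zero_infinite : (D.Above 0).Infinite :=
  D.hL.mono (fun m hm => ⟨hm, D.iter_zero m⟩)

lemma step_child {j : ℕ} (hj : (D.Above j).Infinite)
    (hfin : ∀ j, {k | 0 < k ∧ D.par k = j}.Finite) :
    ∃ c, (0 < c ∧ D.par c = j) ∧ (D.Above c).Infinite := by
  by_contra h
  push_neg at h
  have hsub : D.Above j ⊆ {j} ∪ ⋃ c ∈ {k | 0 < k ∧ D.par k = j}, D.Above c := by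
    intro m hm
    rcases eq_or_ne m j with rfl | hne
    · exact Or.inl rfl
    · right
      obtain ⟨hmL, s, hs⟩ := hm
      have hex : ∃ s, D.par^[s] m = j := ⟨s, hs⟩
      have hfs : D.par^[Nat.find hex] m = j := Nat.find_spec hex
      have hs0pos : 0 < Nat.find hex := by
        rcases Nat.eq_zero_or_pos (Nat.find hex) with h0 | h0
        · exfalso; apply hne; rw [← hfs, h0]; rfl
        · exact h0
      have hpc : D.par (D.par^[Nat.find hex - 1] m) = j := by
        have h1 : D.par^[Nat.find hex - 1 + 1] m = j := by
          rw [Nat.sub_add_cancel hs0pos]; exact hfs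
        rwa [Function.iterate_succ_apply'] at h1
      have hcj : D.par^[Nat.find hex - 1] m ≠ j := fun hh =>
        Nat.find_min hex (by omega) hh
      have hcpos : 0 < D.par^[Nat.find hex - 1] m := by
        rcases Nat.eq_zero_or_pos (D.par^[Nat.find hex - 1] m) with h0 | h0
        · exfalso; apply hcj; rw [h0] at hpc ⊢; rw [← hpc, D.hpar0]
        · exact h0
      exact Set.mem_biUnion ⟨hcpos, hpc⟩ ⟨hmL, Nat.find hex - 1, rfl⟩
  have hfin' : ({j} ∪ ⋃ c ∈ {k | 0 < k ∧ D.par k = j}, D.Above c).Finite := by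
    refine (Set.finite_singleton j).union (Set.Finite.biUnion (hfin j) ?_)
    intro c hc
    exact h c hc
  exact ((hfin'.subset hsub).not_infinite hj).elim

variable (hfin : ∀ j, {k | 0 < k ∧ D.par k = j}.Finite)

noncomputable def ray : ℕ → {j : ℕ // (D.Above j).Infinite}
  | 0 => ⟨0, D.above_zero_infinite⟩
  | i + 1 => ⟨Classical.choose (D.step_child (ray i).2 hfin),
      (Classical.choose_spec (D.step_child (ray i).2 hfin)).2⟩

lemma ray_zero : (D.ray hfin 0).1 = 0 := by simp [ray]

lemma ray_succ (i : ℕ) :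
    0 < (D.ray hfin (i + 1)).1 ∧ D.par (D.ray hfin (i + 1)).1 = (D.ray hfin i).1 := by
  have h : D.ray hfin (i + 1) = ⟨Classical.choose (D.step_child (D.ray hfin i).2 hfin),
      (Classical.choose_spec (D.step_child (D.ray hfin i).2 hfin)).2⟩ := by
    rw [ray]
  rw [h]
  exact (Classical.choose_spec (D.step_child (D.ray hfin i).2 hfin)).1

lemma ray_mono : StrictMono (fun i => (D.ray hfin i).1) := by
  apply strictMono_nat_of_lt_succ
  intro i
  have h := D.ray_succ hfin i
  calc (D.ray hfin i).1 = D.par (D.ray hfin (i + 1)).1 := h.2.symm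
    _ < (D.ray hfin (i + 1)).1 := D.hpar _ h.1

lemma ray_iter (i d : ℕ) : D.par^[d] (D.ray hfin i).1 = (D.ray hfin (i - d)).1 := by
  induction d with
  | zero => simp
  | succ d ih =>
    rw [Function.iterate_succ_apply', ih]
    rcases Nat.eq_zero_or_pos (i - d) with h0 | h0
    · have h1 : i - (d + 1) = 0 := by omega
      rw [h0, h1, D.ray_zero hfin, D.hpar0]
    · obtain ⟨k, hk⟩ := Nat.exists_eq_add_of_lt h0
      have h1 : i - d = k + 1 := by omega
      have h2 : i - (d + 1) = k := by omega
      rw [h1, h2, (D.ray_succ hfin k).2]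

lemma hJex (m : ℕ) : ∃ s, ∃ i, D.par^[s] m = (D.ray hfin i).1 := by
  obtain ⟨s, hs⟩ := D.iter_zero m
  exact ⟨s, 0, by rw [hs, D.ray_zero hfin]⟩

open Classical in
noncomputable def J (m : ℕ) : ℕ := Nat.find (D.hJex hfin m)

open Classical in
noncomputable def gi (m : ℕ) : ℕ := Classical.choose (Nat.find_spec (D.hJex hfin m))

open Classical in
lemma gi_spec (m : ℕ) : D.par^[D.J hfin m] m = (D.ray hfin (D.gi hfin m)).1 :=
  Classical.choose_spec (Nat.find_spec (D.hJex hfin m))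

open Classical in
lemma J_pos_before (m : ℕ) : ∀ e < D.J hfin m, 0 < D.par^[e] m := by
  intro e he
  by_contra h0
  push_neg at h0
  have h0' : D.par^[e] m = 0 := Nat.le_zero.mp h0
  exact Nat.find_min (D.hJex hfin m) he ⟨0, by rw [h0', D.ray_zero hfin]⟩

open Classical in
lemma J_le {m s : ℕ} (h : ∃ i, D.par^[s] m = (D.ray hfin i).1) : D.J hfin m ≤ s :=
  Nat.find_le h

open Classical in
lemma not_ray_before {m e : ℕ} (he : e < D.J hfin m) :
    ¬∃ i, D.par^[e] m = (D.ray hfin i).1 := Nat.find_min (D.hJex hfin m) he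

lemma mem_ray_le {m s i : ℕ} (h : D.par^[s] m = (D.ray hfin i).1) :
    i ≤ D.gi hfin m := by
  have hsJ : D.J hfin m ≤ s := D.J_le hfin ⟨i, h⟩
  have : D.par^[s] m = D.par^[s - D.J hfin m] (D.par^[D.J hfin m] m) := by
    rw [← Function.iterate_add_apply]
    congr 1; omega
  rw [this, D.gi_spec hfin, D.ray_iter hfin] at h
  have := (D.ray_mono hfin).injective h
  omega

lemma tooth_disjoint {m m' : ℕ} (h : D.gi hfin m ≠ D.gi hfin m') :
    Disjoint {x | ∃ e ≤ D.J hfin m, D.par^[e] m = x}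
      {x | ∃ e ≤ D.J hfin m', D.par^[e] m' = x} := by
  rw [Set.disjoint_left]
  rintro x ⟨e, he, rfl⟩ ⟨e', he', hx'⟩
  apply h
  have hxex : ∃ d, ∃ i, D.par^[d] (D.par^[e] m) = (D.ray hfin i).1 := by
    obtain ⟨d, hd⟩ := D.iter_zero (D.par^[e] m)
    exact ⟨d, 0, by rw [hd, D.ray_zero hfin]⟩
  classical
  set k := Nat.find hxex with hk
  have hkspec : ∃ i, D.par^[k] (D.par^[e] m) = (D.ray hfin i).1 := Nat.find_spec hxex
  -- J m = e + k
  have hJm : D.J hfin m = e + k := by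
    have h1 : D.J hfin m ≤ e + k := by
      apply D.J_le hfin
      rw [Nat.add_comm, Function.iterate_add_apply]
      exact hkspec
    have h2 : k ≤ D.J hfin m - e := by
      apply Nat.find_le
      rw [← Function.iterate_add_apply]
      have : D.J hfin m - e + e = D.J hfin m := by omega
      rw [this]
      exact ⟨D.gi hfin m, D.gi_spec hfin m⟩
    omega
  have hJm' : D.J hfin m' = e' + k := by
    have h1 : D.J hfin m' ≤ e' + k := by
      apply D.J_le hfin
      rw [Nat.add_comm, Function.iterate_add_apply, hx']
      exact hkspec
    have h2 : k ≤ D.J hfin m' - e' := by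
      apply Nat.find_le
      have heq : D.par^[D.J hfin m' - e'] (D.par^[e] m) = D.par^[D.J hfin m'] m' := by
        rw [← hx', ← Function.iterate_add_apply]
        congr 1; omega
      rw [heq]
      exact ⟨D.gi hfin m', D.gi_spec hfin m'⟩
    omega
  have e1 : (D.ray hfin (D.gi hfin m)).1 = D.par^[k] (D.par^[e] m) := by
    rw [← D.gi_spec hfin m, hJm, Nat.add_comm, Function.iterate_add_apply]
  have e2 : (D.ray hfin (D.gi hfin m')).1 = D.par^[k] (D.par^[e] m) := by
    rw [← D.gi_spec hfin m', hJm', Nat.add_comm, Function.iterate_add_apply, hx']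
  exact (D.ray_mono hfin).injective (e1.trans e2.symm)

noncomputable def pick (i : ℕ) : ℕ := ((D.ray hfin i).2.nonempty).choose

lemma pick_spec (i : ℕ) : D.pick hfin i ∈ D.Above (D.ray hfin i).1 :=
  ((D.ray hfin i).2.nonempty).choose_spec

noncomputable def tooth : ℕ → ℕ
  | 0 => D.pick hfin 0
  | k + 1 => D.pick hfin (D.gi hfin (tooth k) + 1)

lemma tooth_succ (k : ℕ) :
    D.tooth hfin (k + 1) = D.pick hfin (D.gi hfin (D.tooth hfin k) + 1) := by
  rw [tooth]

lemma tooth_mem (k : ℕ) : D.tooth hfin k ∈ D.L := by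
  cases k with
  | zero => exact (D.pick_spec hfin 0).1
  | succ k => exact (D.pick_spec hfin _).1

lemma gi_tooth_mono : StrictMono (fun k => D.gi hfin (D.tooth hfin k)) := by
  apply strictMono_nat_of_lt_succ
  intro k
  obtain ⟨s, hs⟩ := (D.pick_spec hfin (D.gi hfin (D.tooth hfin k) + 1)).2
  rw [← D.tooth_succ hfin k] at hs
  have := D.mem_ray_le hfin hs
  omega

include D hfin in
theorem comb : HasUComb G U := by
  refine ⟨fun i => D.t (D.ray hfin i).1, ⟨D.ht.comp (D.ray_mono hfin).injective, ?_⟩, ?_⟩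
  · intro i
    have h := D.ray_succ hfin i
    have := D.hadj _ h.1
    rwa [h.2] at this
  · have hW : ∀ k, ∃ w : G.Walk (D.t (D.tooth hfin k))
        (D.t (D.par^[D.J hfin (D.tooth hfin k)] (D.tooth hfin k))), w.IsPath ∧
        w.length = D.J hfin (D.tooth hfin k) ∧
        walkVerts w = D.t '' {x | ∃ e ≤ D.J hfin (D.tooth hfin k),
          D.par^[e] (D.tooth hfin k) = x} :=
      fun k => D.chainWalk _ _ (D.J_pos_before hfin _)
    choose P hpath hlen hverts using hW
    refine ⟨_, _, P, fun k => D.hLU _ (D.tooth_mem hfin k), ?_, hpath, ?_, ?_⟩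
    · intro k
      exact ⟨D.gi hfin (D.tooth hfin k), congrArg D.t (D.gi_spec hfin _).symm⟩
    · intro k
      rw [hverts]
      have hrange : Set.range (fun i => D.t (D.ray hfin i).1)
          = D.t '' Set.range (fun i => (D.ray hfin i).1) := by
        rw [← Set.range_comp]; rfl
      rw [hrange, ← Set.image_inter D.ht]
      have : {x | ∃ e ≤ D.J hfin (D.tooth hfin k), D.par^[e] (D.tooth hfin k) = x}
          ∩ Set.range (fun i => (D.ray hfin i).1)
          = {D.par^[D.J hfin (D.tooth hfin k)] (D.tooth hfin k)} := by
        apply Set.eq_singleton_iff_unique_mem.mpr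
        constructor
        · exact ⟨⟨D.J hfin _, le_refl _, rfl⟩, D.gi hfin _, (D.gi_spec hfin _).symm⟩
        · rintro x ⟨⟨e, he, rfl⟩, i, hi⟩
          rcases eq_or_lt_of_le he with rfl | hlt
          · rfl
          · exact absurd ⟨i, hi.symm⟩ (D.not_ray_before hfin hlt)
      rw [this, Set.image_singleton]
    · intro k k' hne
      rw [hverts, hverts]
      rw [Set.disjoint_image_iff D.ht]
      exact D.tooth_disjoint hfin ((D.gi_tooth_mono hfin).injective.ne hne)

/-! ### Star case -/

lemma chain_child_aux {j i i' m s s' : ℕ} (hij' : j < i') (hi : D.par i = j)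
    (h : D.par^[s] m = i) (h' : D.par^[s'] m = i') (hss : s ≤ s') : i = i' := by
  have key : D.par^[s' - s] i = i' := by
    rw [← h, ← Function.iterate_add_apply]
    rw [show s' - s + s = s' by omega]
    exact h'
  rcases Nat.eq_zero_or_pos (s' - s) with h0 | h0
  · rw [h0, Function.iterate_zero_apply] at key; exact key
  · exfalso
    have h1 : D.par^[s' - s] i ≤ D.par^[1] i := D.iter_le i h0
    rw [Function.iterate_one, hi, key] at h1
    omega

lemma chain_child {j i i' m s s' : ℕ} (hij : j < i) (hi : D.par i = j)
    (hij' : j < i') (hi' : D.par i' = j)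
    (h : D.par^[s] m = i) (h' : D.par^[s'] m = i') : i = i' := by
  rcases le_total s s' with hss | hss
  · exact D.chain_child_aux hij' hi h h' hss
  · exact (D.chain_child_aux hij hi' h' h hss).symm

lemma star_inter {j i i' m m' s s' : ℕ}
    (hij : j < i) (hi : D.par i = j) (hij' : j < i') (hi' : D.par i' = j)
    (h : D.par^[s] m = i) (h' : D.par^[s'] m' = i') (hne : i ≠ i') :
    {x | ∃ e ≤ s + 1, D.par^[e] m = x} ∩ {x | ∃ e ≤ s' + 1, D.par^[e] m' = x} ⊆ {j} := by
  have hend : D.par^[s + 1] m = j := by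
    rw [Function.iterate_succ_apply', h, hi]
  have hend' : D.par^[s' + 1] m' = j := by
    rw [Function.iterate_succ_apply', h', hi']
  rintro x ⟨⟨e, he, rfl⟩, ⟨e', he', hx'⟩⟩
  simp only [Set.mem_singleton_iff]
  by_contra hxj
  have hse : e ≤ s := by
    rcases eq_or_lt_of_le he with rfl | hlt
    · exact absurd hend hxj
    · omega
  have hse' : e' ≤ s' := by
    rcases eq_or_lt_of_le he' with rfl | hlt
    · rw [hx'] at hend'; exact absurd hend' hxj
    · omega
  have hgt : ∀ c ≤ s - e, j < D.par^[c] (D.par^[e] m) := by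
    intro c hc
    rw [← Function.iterate_add_apply]
    have h1 : D.par^[s] m ≤ D.par^[c + e] m := D.iter_le m (by omega)
    rw [h] at h1
    omega
  have hgt' : ∀ c ≤ s' - e', j < D.par^[c] (D.par^[e] m) := by
    intro c hc
    rw [← hx', ← Function.iterate_add_apply]
    have h1 : D.par^[s'] m' ≤ D.par^[c + e'] m' := D.iter_le m' (by omega)
    rw [h'] at h1
    omega
  have hd : D.par^[s + 1 - e] (D.par^[e] m) = j := by
    rw [← Function.iterate_add_apply, show s + 1 - e + e = s + 1 by omega]
    exact hend
  have hd' : D.par^[s' + 1 - e'] (D.par^[e] m) = j := by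
    rw [← hx', ← Function.iterate_add_apply, show s' + 1 - e' + e' = s' + 1 by omega]
    exact hend'
  have hdd : s + 1 - e = s' + 1 - e' := by
    rcases lt_trichotomy (s + 1 - e) (s' + 1 - e') with hlt | heq | hlt
    · have := hgt' (s + 1 - e) (by omega)
      omega
    · exact heq
    · have := hgt (s' + 1 - e') (by omega)
      omega
  have hi1 : D.par^[s - e] (D.par^[e] m) = i := by
    rw [← Function.iterate_add_apply, show s - e + e = s by omega]
    exact h
  have hi2 : D.par^[s' - e'] (D.par^[e] m) = i' := by
    rw [← hx', ← Function.iterate_add_apply, show s' - e' + e' = s' by omega]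
    exact h'
  apply hne
  rw [← hi1, ← hi2, show s - e = s' - e' by omega]

include D in
theorem star {j : ℕ} (hinf : ¬ {k | 0 < k ∧ D.par k = j}.Finite) : HasTwoStar G U := by
  classical
  have hC : ({k | 0 < k ∧ D.par k = j} \ {j + 1}).Infinite :=
    (show Set.Infinite _ from hinf).diff (Set.finite_singleton _)
  set p : ℕ → Prop := fun k => k ∈ ({k | 0 < k ∧ D.par k = j} \ {j + 1}) with hp
  have hps : setOf p = {k | 0 < k ∧ D.par k = j} \ {j + 1} := rfl
  have hpinf : (setOf p).Infinite := by rw [hps]; exact hC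
  set i : ℕ → ℕ := fun k => Nat.nth p k with hi
  have himem : ∀ k, 0 < i k ∧ D.par (i k) = j ∧ i k ≠ j + 1 := by
    intro k
    have := Nat.nth_mem_of_infinite hpinf k
    rw [hp] at this
    exact ⟨this.1.1, this.1.2, this.2⟩
  have hiinj : Function.Injective i := (Nat.nth_strictMono hpinf).injective
  have hji : ∀ k, j < i k := fun k => (himem k).2.1 ▸ D.hpar _ (himem k).1
  have hleaf : ∀ k, ∃ m ∈ D.L, ∃ s, D.par^[s] m = i k := fun k => D.hcover (i k)
  choose m hmL s hs using hleaf
  have hs1 : ∀ k, 1 ≤ s k := by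
    intro k
    by_contra h0
    have hs0 : s k = 0 := by omega
    have : m k = i k := by rw [← hs k, hs0, Function.iterate_zero_apply]
    obtain ⟨h1, h2⟩ := D.hLpar (m k) (hmL k)
    apply (himem k).2.2
    have h3 := (himem k).2.1
    rw [this] at h2 h1
    omega
  have hpos : ∀ k, ∀ e < s k + 1, 0 < D.par^[e] (m k) := by
    intro k e he
    have h1 : D.par^[s k] (m k) ≤ D.par^[e] (m k) := D.iter_le _ (by omega)
    rw [hs k] at h1
    have := (himem k).1
    omega
  have hend : ∀ k, D.par^[s k + 1] (m k) = j := by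
    intro k
    rw [Function.iterate_succ_apply', hs k, (himem k).2.1]
  have hW : ∀ k, ∃ w : G.Walk (D.t (m k)) (D.t (D.par^[s k + 1] (m k))), w.IsPath ∧
      w.length = s k + 1 ∧
      walkVerts w = D.t '' {x | ∃ e ≤ s k + 1, D.par^[e] (m k) = x} :=
    fun k => D.chainWalk _ _ (hpos k)
  choose w hpath hlen hverts using hW
  have hm_inj : Function.Injective m := by
    intro k k' hkk
    apply hiinj
    have h1 := hs k
    have h2 := hs k'
    rw [hkk] at h1
    exact D.chain_child (hji k) (himem k).2.1 (hji k') (himem k').2.1 h1 h2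
  refine ⟨D.t j, fun k => D.t (m k),
    fun k => ((w k).copy rfl (congrArg D.t (hend k))).reverse, ?_, ?_, ?_, ?_, ?_⟩
  · exact fun k k' hkk => hm_inj (D.ht hkk)
  · exact fun k => D.hLU _ (hmL k)
  · intro k
    exact ((SimpleGraph.Walk.isPath_copy _ rfl _).mpr (hpath k)).reverse
  · intro k
    rw [SimpleGraph.Walk.length_reverse, SimpleGraph.Walk.length_copy, hlen k]
    have := hs1 k
    omega
  · intro k k' hkk
    have hvv : ∀ k, walkVerts (((w k).copy rfl (congrArg D.t (hend k))).reverse)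
        = D.t '' {x | ∃ e ≤ s k + 1, D.par^[e] (m k) = x} := by
      intro k
      rw [← hverts k]
      ext x
      simp [walkVerts, SimpleGraph.Walk.support_reverse, List.mem_reverse]
      exact Iff.of_eq (congrArg (x ∈ ·) (SimpleGraph.Walk.support_copy _ _ _))
    rw [hvv k, hvv k', ← Set.image_inter D.ht]
    have hne : i k ≠ i k' := fun h => hkk (hiinj h)
    apply Set.Subset.antisymm
    · intro x hx
      obtain ⟨y, hy, rfl⟩ := hx
      have := D.star_inter (hji k) (himem k).2.1 (hji k') (himem k').2.1
        (hs k) (hs k') hne hy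
      simp only [Set.mem_singleton_iff] at this ⊢
      rw [this]
    · intro x hx
      simp only [Set.mem_singleton_iff] at hx
      subst hx
      exact ⟨j, ⟨⟨s k + 1, le_refl _, hend k⟩, ⟨s k' + 1, le_refl _, hend k'⟩⟩, rfl⟩

include D in
theorem comb_or_twoStar : HasUComb G U ∨ HasTwoStar G U := by
  by_cases hf : ∀ j, {k | 0 < k ∧ D.par k = j}.Finite
  · exact Or.inl (D.comb hf)
  · push_neg at hf
    obtain ⟨j, hj⟩ := hf
    exact Or.inr (D.star hj)

end TreeData
/-! ### Construction of the tree -/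

section Construction

variable {α : Type} [DecidableEq α] {G : SimpleGraph α} {U : Set α}

lemma iter_zero' {par : ℕ → ℕ} (hpar0 : par 0 = 0) (hpar : ∀ n, 0 < n → par n < n)
    (m : ℕ) : ∃ s, par^[s] m = 0 := by
  induction m using Nat.strong_induction_on with
  | _ m ih =>
    rcases Nat.eq_zero_or_pos m with h | h
    · exact ⟨0, h⟩
    · obtain ⟨s, hs⟩ := ih (par m) (hpar m h)
      exact ⟨s + 1, by rwa [Function.iterate_succ_apply]⟩

lemma walk_suffix {S : Set α} {s u : α} (w : G.Walk s u) :
    u ∉ S → (∃ x ∈ w.support, x ∈ S) →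
      ∃ a, ∃ l : List α, a ∈ S ∧ l ≠ [] ∧ (∀ x ∈ l, x ∉ S) ∧
        (a :: l) <:+ w.support ∧ l.getLast? = some u := by
  induction w with
  | nil =>
    intro hu hex
    obtain ⟨x, hx, hxS⟩ := hex
    rw [SimpleGraph.Walk.support_nil, List.mem_singleton] at hx
    subst hx
    exact absurd hxS hu
  | @cons a b c h w ih =>
    intro hu hex
    by_cases hex' : ∃ x ∈ w.support, x ∈ S
    · obtain ⟨a', l, h1, h2, h3, h4, h5⟩ := ih hu hex'
      exact ⟨a', l, h1, h2, h3, h4.trans (List.suffix_cons _ _), h5⟩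
    · push_neg at hex'
      have haS : a ∈ S := by
        obtain ⟨x, hx, hxS⟩ := hex
        rw [SimpleGraph.Walk.support_cons, List.mem_cons] at hx
        rcases hx with rfl | hx
        · exact hxS
        · exact absurd hxS (hex' x hx)
      refine ⟨a, w.support, haS, w.support_ne_nil, hex', ?_, ?_⟩
      · rw [SimpleGraph.Walk.support_cons]
      · have h1 : w.support.getLast w.support_ne_nil = c := by simp
        rw [List.getLast?_eq_getLast_of_ne_nil w.support_ne_nil, h1]

def QQ (G : SimpleGraph α) (U : Set α) (cur : List α) (a : α) (l : List α) : Prop :=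
  a ∈ cur ∧ 2 ≤ l.length ∧ l.Nodup ∧ (∀ x ∈ l, x ∉ cur) ∧
    List.Chain' G.Adj (a :: l) ∧ ∃ v ∈ U, l.getLast? = some v

lemma exists_ext (hG : G.Connected)
    (hdom : ∀ Dset : Set α, Dset.Finite → ¬Dominates G Dset U)
    (cur : List α) (hne : cur ≠ []) : ∃ a l, QQ G U cur a l := by
  have hnd := hdom {x | x ∈ cur} cur.finite_toSet
  rw [Dominates] at hnd
  push_neg at hnd
  obtain ⟨u, hu, huD, hadj⟩ := hnd
  have hs0 : cur.head hne ∈ ({x | x ∈ cur} : Set α) := cur.head_mem hne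
  obtain ⟨w0⟩ := hG.preconnected (cur.head hne) u
  obtain ⟨a, l, h1, h2, h3, h4, h5⟩ :=
    walk_suffix (S := {x | x ∈ cur}) (w0.toPath : G.Path _ _).1 huD
      ⟨_, SimpleGraph.Walk.start_mem_support _, hs0⟩
  have hnodup : (a :: l).Nodup := (w0.toPath).2.support_nodup.sublist h4.sublist
  have hchain : List.Chain' G.Adj (a :: l) := ((w0.toPath : G.Path _ _).1.isChain_adj_support).suffix h4
  refine ⟨a, l, h1, ?_, hnodup.of_cons, h3, hchain, u, hu, h5⟩
  by_contra hlen
  push_neg at hlen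
  have h1len : l.length = 1 := by
    have := List.length_pos_iff.mpr h2
    omega
  obtain ⟨b, rfl⟩ := List.length_eq_one_iff.mp h1len
  have hb : b = u := by
    simp only [List.getLast?_singleton, Option.some.injEq] at h5
    exact h5
  subst hb
  exact hadj a h1 (List.isChain_pair.mp hchain)

open Classical in
noncomputable def extChoice (hG : G.Connected)
    (hdom : ∀ Dset : Set α, Dset.Finite → ¬Dominates G Dset U)
    (cur : List α) : α × List α :=
  if h : ∃ a l, QQ G U cur a l then (h.choose, h.choose_spec.choose)
  else (Classical.choice hG.nonempty, [])

lemma extChoice_spec (hG : G.Connected)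
    (hdom : ∀ Dset : Set α, Dset.Finite → ¬Dominates G Dset U)
    {cur : List α} (hne : cur ≠ []) :
    QQ G U cur (extChoice hG hdom cur).1 (extChoice hG hdom cur).2 := by
  have h := exists_ext hG hdom cur hne
  rw [extChoice, dif_pos h]
  exact h.choose_spec.choose_spec

variable (hG : G.Connected) (hdom : ∀ Dset : Set α, Dset.Finite → ¬Dominates G Dset U)

noncomputable def stages : ℕ → List α × List ℕ
  | 0 => ([Classical.choice hG.nonempty], [0])
  | k + 1 =>
    ((stages k).1 ++ (extChoice hG hdom (stages k).1).2,
     (stages k).2 ++ ((stages k).1.idxOf (extChoice hG hdom (stages k).1).1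
       :: (List.range ((extChoice hG hdom (stages k).1).2.length - 1)).map
            (fun i => (stages k).1.length + i)))

lemma stages_zero : stages hG hdom 0 = ([Classical.choice hG.nonempty], [0]) := by
  rw [stages]

lemma stages_succ (k : ℕ) : stages hG hdom (k + 1) =
    ((stages hG hdom k).1 ++ (extChoice hG hdom (stages hG hdom k).1).2,
     (stages hG hdom k).2 ++ ((stages hG hdom k).1.idxOf (extChoice hG hdom (stages hG hdom k).1).1
       :: (List.range ((extChoice hG hdom (stages hG hdom k).1).2.length - 1)).map
            (fun i => (stages hG hdom k).1.length + i))) := by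
  rw [stages]

noncomputable def segN (k : ℕ) : ℕ := (stages hG hdom k).1.length

noncomputable def segL (k : ℕ) : List α := (extChoice hG hdom (stages hG hdom k).1).2

noncomputable def segA (k : ℕ) : α := (extChoice hG hdom (stages hG hdom k).1).1

lemma stages_inv (k : ℕ) : (stages hG hdom k).1 ≠ [] ∧ (stages hG hdom k).1.Nodup ∧
    (stages hG hdom k).2.length = segN hG hdom k ∧ k + 1 ≤ segN hG hdom k := by
  induction k with
  | zero =>
    refine ⟨by simp [stages_zero], by simp [stages_zero], ?_, ?_⟩ <;>
      simp [stages_zero, segN]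
  | succ k ih =>
    obtain ⟨hne, hnd, hlen, hN⟩ := ih
    have hq := extChoice_spec hG hdom hne
    obtain ⟨ha, hlen2, hnd2, hdisj, hch, hv⟩ := hq
    have hl1 : 1 ≤ (extChoice hG hdom (stages hG hdom k).1).2.length := by omega
    refine ⟨?_, ?_, ?_, ?_⟩
    · rw [stages_succ]
      simp only
      intro hc
      exact hne (List.append_eq_nil_iff.mp hc).1
    · rw [stages_succ]
      simp only
      rw [List.nodup_append]
      exact ⟨hnd, hnd2, fun x hx y hy hxy => hdisj y hy (hxy ▸ hx)⟩
    · rw [stages_succ, segN, stages_succ]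
      simp only [List.length_append, List.length_cons, List.length_map, List.length_range]
      rw [hlen]
      simp only [segN]
      omega
    · rw [segN, stages_succ]
      simp only [List.length_append]
      rw [segN] at hN
      omega

lemma segN_succ (k : ℕ) :
    segN hG hdom (k + 1) = segN hG hdom k + (segL hG hdom k).length := by
  rw [segN, segN, stages_succ, segL]
  simp

lemma segL_len (k : ℕ) : 2 ≤ (segL hG hdom k).length :=
  (extChoice_spec hG hdom (stages_inv hG hdom k).1).2.1

lemma stages_prefix {j k : ℕ} (h : j ≤ k) :
    (stages hG hdom j).1 <+: (stages hG hdom k).1 ∧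
      (stages hG hdom j).2 <+: (stages hG hdom k).2 := by
  induction k with
  | zero =>
    have : j = 0 := Nat.le_zero.mp h
    subst this
    exact ⟨List.prefix_refl _, List.prefix_refl _⟩
  | succ k ih =>
    rcases Nat.lt_or_ge j (k + 1) with h' | h'
    · obtain ⟨h1, h2⟩ := ih (by omega)
      rw [stages_succ]
      exact ⟨h1.trans (List.prefix_append _ _), h2.trans (List.prefix_append _ _)⟩
    · have : j = k + 1 := by omega
      subst this
      exact ⟨List.prefix_refl _, List.prefix_refl _⟩

noncomputable def tV (n : ℕ) : α :=
  (stages hG hdom (n + 1)).1.getD n (Classical.choice hG.nonempty)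

noncomputable def pV (n : ℕ) : ℕ := (stages hG hdom (n + 1)).2.getD n 0

lemma lt_segN (n : ℕ) : n < segN hG hdom (n + 1) := by
  have := (stages_inv hG hdom (n + 1)).2.2.2
  omega

lemma tV_eq {k n : ℕ} (hn : n < segN hG hdom k) :
    tV hG hdom n = (stages hG hdom k).1.getD n (Classical.choice hG.nonempty) := by
  have hn1 : n < segN hG hdom (n + 1) := lt_segN hG hdom n
  rw [tV]
  rcases le_total (n + 1) k with h | h
  · obtain ⟨hp, _⟩ := stages_prefix hG hdom h
    rw [List.getD_eq_getElem _ _ hn1, List.getD_eq_getElem _ _ hn, hp.getElem hn1]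
    rfl
  · obtain ⟨hp, _⟩ := stages_prefix hG hdom h
    rw [List.getD_eq_getElem _ _ hn1, List.getD_eq_getElem _ _ hn, hp.getElem hn]
    rfl

lemma pV_eq {k n : ℕ} (hn : n < segN hG hdom k) :
    pV hG hdom n = (stages hG hdom k).2.getD n 0 := by
  have hn1 : n < segN hG hdom (n + 1) := lt_segN hG hdom n
  have hl1 : (stages hG hdom (n + 1)).2.length = segN hG hdom (n + 1) :=
    (stages_inv hG hdom (n + 1)).2.2.1
  have hl2 : (stages hG hdom k).2.length = segN hG hdom k :=
    (stages_inv hG hdom k).2.2.1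
  rw [pV]
  rcases le_total (n + 1) k with h | h
  · obtain ⟨_, hp⟩ := stages_prefix hG hdom h
    rw [List.getD_eq_getElem _ _ (by omega), List.getD_eq_getElem _ _ (by omega),
      hp.getElem (by omega)]
  · obtain ⟨_, hp⟩ := stages_prefix hG hdom h
    rw [List.getD_eq_getElem _ _ (by omega), List.getD_eq_getElem _ _ (by omega),
      hp.getElem (by omega)]

lemma stages1_succ (k : ℕ) : (stages hG hdom (k + 1)).1
    = (stages hG hdom k).1 ++ segL hG hdom k := by
  unfold segL
  rw [stages_succ]

lemma stages2_succ (k : ℕ) : (stages hG hdom (k + 1)).2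
    = (stages hG hdom k).2 ++ ((stages hG hdom k).1.idxOf (segA hG hdom k)
       :: (List.range ((segL hG hdom k).length - 1)).map (fun i => segN hG hdom k + i)) := by
  unfold segA segL segN
  rw [stages_succ]

lemma tV_seg (k : ℕ) {i : ℕ} (hi : i < (segL hG hdom k).length) :
    tV hG hdom (segN hG hdom k + i)
      = (segL hG hdom k).getD i (Classical.choice hG.nonempty) := by
  have hb : segN hG hdom k + i < segN hG hdom (k + 1) := by
    rw [segN_succ]; omega
  rw [tV_eq hG hdom hb, stages1_succ]
  rw [List.getD_append_right _ _ _ _ (by rw [segN]; omega)]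
  congr 1
  rw [segN]
  omega

lemma pV_seg (k : ℕ) {i : ℕ} (hi : i < (segL hG hdom k).length) :
    pV hG hdom (segN hG hdom k + i)
      = if i = 0 then (stages hG hdom k).1.idxOf (segA hG hdom k)
        else segN hG hdom k + i - 1 := by
  have hb : segN hG hdom k + i < segN hG hdom (k + 1) := by
    rw [segN_succ]; omega
  have hlk : (stages hG hdom k).2.length = segN hG hdom k := (stages_inv hG hdom k).2.2.1
  rw [pV_eq hG hdom hb, stages2_succ]
  rw [List.getD_append_right _ _ _ _ (by omega)]
  rw [hlk, Nat.add_sub_cancel_left]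
  cases i with
  | zero => simp
  | succ i' =>
    simp only [Nat.succ_ne_zero, if_false]
    have hi' : i' < ((List.range ((segL hG hdom k).length - 1)).map
        (fun i => segN hG hdom k + i)).length := by
      simp; omega
    rw [List.getD_cons_succ, List.getD_eq_getElem _ _ hi', List.getElem_map,
      List.getElem_range]
    omega

lemma pV_zero : pV hG hdom 0 = 0 := by
  have h0 : 0 < segN hG hdom 0 := by rw [segN, stages_zero]; simp
  rw [pV_eq hG hdom h0, stages_zero]
  simp

lemma seg_decomp {n : ℕ} (hn : 0 < n) :
    ∃ k i, n = segN hG hdom k + i ∧ i < (segL hG hdom k).length := by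
  classical
  have hex : ∃ k, n < segN hG hdom k :=
    ⟨n + 1, by have := (stages_inv hG hdom (n + 1)).2.2.2; omega⟩
  have hk0 : n < segN hG hdom (Nat.find hex) := Nat.find_spec hex
  have hN0 : segN hG hdom 0 = 1 := by rw [segN, stages_zero]; simp
  have hk0pos : 0 < Nat.find hex := by
    rcases Nat.eq_zero_or_pos (Nat.find hex) with h | h
    · rw [h, hN0] at hk0; omega
    · exact h
  have hmin : ¬n < segN hG hdom (Nat.find hex - 1) := Nat.find_min hex (by omega)
  refine ⟨Nat.find hex - 1, n - segN hG hdom (Nat.find hex - 1), by omega, ?_⟩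
  have hs := segN_succ hG hdom (Nat.find hex - 1)
  rw [show Nat.find hex - 1 + 1 = Nat.find hex from by omega] at hs
  omega

lemma tV_inj : Function.Injective (tV hG hdom) := by
  intro m n hmn
  by_contra hne
  have hm : m < segN hG hdom (max m n + 1) := by
    have := (stages_inv hG hdom (max m n + 1)).2.2.2; omega
  have hn : n < segN hG hdom (max m n + 1) := by
    have := (stages_inv hG hdom (max m n + 1)).2.2.2; omega
  rw [tV_eq hG hdom hm, tV_eq hG hdom hn, List.getD_eq_getElem _ _ hm,
    List.getD_eq_getElem _ _ hn] at hmn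
  exact hne (((stages_inv hG hdom (max m n + 1)).2.1).getElem_inj_iff.mp hmn)

lemma pV_lt : ∀ n, 0 < n → pV hG hdom n < n := by
  intro n hn
  obtain ⟨k, i, rfl, hi⟩ := seg_decomp hG hdom hn
  rw [pV_seg hG hdom k hi]
  have hmem : segA hG hdom k ∈ (stages hG hdom k).1 :=
    (extChoice_spec hG hdom (stages_inv hG hdom k).1).1
  have hidx : (stages hG hdom k).1.idxOf (segA hG hdom k) < segN hG hdom k :=
    List.idxOf_lt_length_iff.mpr hmem
  split
  · omega
  · omega

lemma pV_adj : ∀ n, 0 < n → G.Adj (tV hG hdom (pV hG hdom n)) (tV hG hdom n) := by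
  intro n hn
  obtain ⟨k, i, rfl, hi⟩ := seg_decomp hG hdom hn
  have hq := extChoice_spec hG hdom (stages_inv hG hdom k).1
  have hchain : List.Chain' G.Adj (segA hG hdom k :: segL hG hdom k) := hq.2.2.2.2.1
  unfold List.Chain' at hchain
  rw [List.isChain_iff_getElem] at hchain
  have htn : tV hG hdom (segN hG hdom k + i) = (segL hG hdom k).getD i
      (Classical.choice hG.nonempty) := tV_seg hG hdom k hi
  rw [pV_seg hG hdom k hi]
  cases i with
  | zero =>
    have hmem : segA hG hdom k ∈ (stages hG hdom k).1 := hq.1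
    have hidx : (stages hG hdom k).1.idxOf (segA hG hdom k)
        < (stages hG hdom k).1.length := List.idxOf_lt_length_iff.mpr hmem
    have htp : tV hG hdom ((stages hG hdom k).1.idxOf (segA hG hdom k))
        = segA hG hdom k := by
      rw [tV_eq hG hdom (show _ < segN hG hdom k from hidx),
        List.getD_eq_getElem _ _ hidx, List.getElem_idxOf]
    rw [if_pos rfl, htp, htn, List.getD_eq_getElem _ _ hi]
    have := hchain 0 (by simp; omega)
    simpa using this
  | succ i' =>
    simp only [Nat.succ_ne_zero, if_false]
    have hi' : i' < (segL hG hdom k).length := by omega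
    have hstep : segN hG hdom k + (i' + 1) - 1 = segN hG hdom k + i' := by omega
    rw [hstep, tV_seg hG hdom k hi', htn]
    have := hchain (i' + 1) (by simp; omega)
    rw [List.getD_eq_getElem _ _ hi', List.getD_eq_getElem _ _ hi]
    simpa using this

lemma leaf_val (k : ℕ) : tV hG hdom (segN hG hdom (k + 1) - 1) ∈ U := by
  have h2 := segL_len hG hdom k
  have hdec : segN hG hdom (k + 1) - 1 = segN hG hdom k + ((segL hG hdom k).length - 1) := by
    have := segN_succ hG hdom k
    have hp : 1 ≤ segN hG hdom k := by have := (stages_inv hG hdom k).2.2.2; omega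
    omega
  rw [hdec, tV_seg hG hdom k (by omega)]
  obtain ⟨v, hvU, hvl⟩ := (extChoice_spec hG hdom (stages_inv hG hdom k).1).2.2.2.2.2
  have hne : segL hG hdom k ≠ [] := by
    intro h; rw [h] at h2; simp at h2
  have hvl2 : (segL hG hdom k).getLast? = some v := hvl
  rw [List.getLast?_eq_getLast_of_ne_nil hne] at hvl2
  have hvl' : (segL hG hdom k).getLast hne = v := by injection hvl2
  rw [List.getD_eq_getElem _ _ (by omega), ← List.getLast_eq_getElem hne, hvl']
  exact hvU

lemma iter_seg (k : ℕ) {j : ℕ} (hj : j < (segL hG hdom k).length) :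
    ∀ d, d ≤ j → (pV hG hdom)^[d] (segN hG hdom k + j) = segN hG hdom k + (j - d) := by
  intro d
  induction d with
  | zero => intro _; simp
  | succ d ih =>
    intro hd
    rw [Function.iterate_succ_apply', ih (by omega)]
    have h1 : 1 ≤ j - d := by omega
    have : pV hG hdom (segN hG hdom k + (j - d))
        = segN hG hdom k + (j - d) - 1 := by
      rw [pV_seg hG hdom k (show j - d < _ by omega)]
      simp only [if_neg (by omega : ¬ j - d = 0)]
    rw [this]
    omega

lemma cover (n : ℕ) : ∃ m ∈ Set.range (fun k => segN hG hdom (k + 1) - 1),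
    ∃ s, (pV hG hdom)^[s] m = n := by
  rcases Nat.eq_zero_or_pos n with rfl | hn
  · exact ⟨segN hG hdom 1 - 1, ⟨0, rfl⟩,
      iter_zero' (pV_zero hG hdom) (pV_lt hG hdom) _⟩
  · obtain ⟨k, i, rfl, hi⟩ := seg_decomp hG hdom hn
    have h2 := segL_len hG hdom k
    have hdec : segN hG hdom (k + 1) - 1
        = segN hG hdom k + ((segL hG hdom k).length - 1) := by
      have := segN_succ hG hdom k
      have hp : 1 ≤ segN hG hdom k := by have := (stages_inv hG hdom k).2.2.2; omega
      omega
    refine ⟨segN hG hdom (k + 1) - 1, ⟨k, rfl⟩, (segL hG hdom k).length - 1 - i, ?_⟩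
    rw [hdec, iter_seg hG hdom k (by omega) _ (by omega)]
    omega

include hG hdom in
theorem exists_treeData : Nonempty (TreeData G U) := by
  refine ⟨⟨tV hG hdom, pV hG hdom, Set.range (fun k => segN hG hdom (k + 1) - 1),
    tV_inj hG hdom, pV_zero hG hdom, pV_lt hG hdom, pV_adj hG hdom, ?_, ?_, ?_,
    cover hG hdom⟩⟩
  · apply Set.infinite_range_of_injective
    have hsm : StrictMono (fun k => segN hG hdom (k + 1) - 1) := by
      apply strictMono_nat_of_lt_succ
      intro k
      have h1 := segN_succ hG hdom (k + 1)
      have h2 := segL_len hG hdom (k + 1)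
      have hp : 1 ≤ segN hG hdom (k + 1) := by
        have := (stages_inv hG hdom (k + 1)).2.2.2; omega
      beta_reduce
      omega
    exact hsm.injective
  · rintro m ⟨k, rfl⟩
    exact leaf_val hG hdom k
  · rintro m ⟨k, rfl⟩
    have h2 := segL_len hG hdom k
    have hp : 1 ≤ segN hG hdom k := by have := (stages_inv hG hdom k).2.2.2; omega
    have hdec : segN hG hdom (k + 1) - 1
        = segN hG hdom k + ((segL hG hdom k).length - 1) := by
      have := segN_succ hG hdom k
      omega
    constructor
    · beta_reduce
      omega
    · beta_reduce
      rw [hdec, pV_seg hG hdom k (by omega)]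
      simp only [if_neg (by omega : ¬ (segL hG hdom k).length - 1 = 0)]

end Construction

end StarComb

/-- Let `G` be a connected countable graph and `U ⊆ V(G)` infinite. Then `G`
contains a `U`-comb, or a 2-star with all leaves in `U`, or a finite vertex set
dominating `U`. -/
theorem comb_twoStar_or_dominating {α : Type} [Countable α] (G : SimpleGraph α)
    (hG : G.Connected) (U : Set α) (hU : U.Infinite) :
    HasUComb G U ∨ HasTwoStar G U ∨ ∃ D : Set α, D.Finite ∧ Dominates G D U := by
  classical
  by_cases hdom : ∃ D : Set α, D.Finite ∧ Dominates G D U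
  · exact Or.inr (Or.inr hdom)
  · push_neg at hdom
    have hdom' : ∀ Dset : Set α, Dset.Finite → ¬Dominates G Dset U := hdom
    obtain ⟨D⟩ := StarComb.exists_treeData hG hdom'
    rcases D.comb_or_twoStar with h | h
    · exact Or.inl h
    · exact Or.inr (Or.inl h)
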